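/- Let u be a C² solution of u'' + ((N-1)/r)u' + f(u) = 0 on (0,R) with f continuous and F(s) = ∫₀ˢ f(t)dt. Define the Pohozaev functional E(r) = 2 r^N (|u'(r)|²/2 + F(u(r))) + (N-2) r^{N-1} u'(r) u(r). Then E'(r) = r^{N-1} Q(u(r)) for all r in (0,R), where Q(s) = 2N F(s) - (N-2) s f(s). -/

import Mathlib

open Set

/-- Pohozaev identity: E'(r) = r^{N-1} Q(u(r)). -/
theorem pohozaev_derivative
    (N : ℕ) (hN : 2 ≤ N) (f : ℝ → ℝ) (hf : Continuous f)
    (R : ℝ) (hR : 0 < R) (u u' : ℝ → ℝ)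
    (hu : ∀ r ∈ Ioo (0:ℝ) R, HasDerivAt u (u' r) r)
    (hode : ∀ r ∈ Ioo (0:ℝ) R,
      HasDerivAt u' (-(((N:ℝ) - 1) / r * u' r + f (u r))) r) :
    ∀ r ∈ Ioo (0:ℝ) R,
      HasDerivAt
        (fun r => 2 * r ^ N * ((u' r) ^ 2 / 2 + ∫ t in (0:ℝ)..(u r), f t)
          + ((N:ℝ) - 2) * r ^ (N - 1) * u' r * u r)
        (r ^ (N - 1) *
          (2 * (N:ℝ) * (∫ t in (0:ℝ)..(u r), f t) - ((N:ℝ) - 2) * u r * f (u r))) r := by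
  intro r hr
  obtain ⟨m, rfl⟩ : ∃ m, N = m + 2 := ⟨N - 2, by omega⟩
  have hr0 : r ≠ 0 := ne_of_gt hr.1
  have hu' := hu r hr
  have hode' := hode r hr
  have hF : HasDerivAt (fun r => ∫ t in (0:ℝ)..(u r), f t) (f (u r) * u' r) r :=
    (intervalIntegral.integral_hasDerivAt_right (hf.intervalIntegrable 0 (u r))
      (hf.stronglyMeasurableAtFilter _ _) hf.continuousAt).comp r hu'
  have h1 : HasDerivAt (fun r : ℝ => r ^ (m + 2)) ((m + 2 : ℝ) * r ^ (m + 1)) r := by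
    simpa using hasDerivAt_pow (m + 2) r
  have h2 : HasDerivAt (fun r : ℝ => r ^ (m + 1)) ((m + 1 : ℝ) * r ^ m) r := by
    simpa using hasDerivAt_pow (m + 1) r
  have hsq : HasDerivAt (fun r => (u' r) ^ 2 / 2)
      ((2 * u' r ^ 1 * (-((((m + 2 : ℕ) : ℝ) - 1) / r * u' r + f (u r)))) / 2) r :=
    (hode'.pow 2).div_const 2
  have hA := (h1.const_mul 2).mul (hsq.add hF)
  have hB := ((h2.const_mul (((m + 2 : ℕ) : ℝ) - 2)).mul hode').mul hu'
  have hE := hA.add hB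
  have e1 : (m + 2) - 1 = m + 1 := rfl
  rw [e1]
  refine hE.congr_deriv ?_
  simp only [Pi.add_apply, Pi.mul_apply]
  push_cast
  field_simp
  ring
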